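/- Let a < b, 1/2 < α ≤ 1, let q : [a,b] → ℝ be continuous, and let G be the Green's function for the fractional Dirichlet problem. If a nontrivial continuous function u : [a,b] → ℝ satisfies u(x) = ∫_a^b G(x,t) q(t) u(t) dt for all x, then ∫_a^b |q(t)| dt ≥ (sup_{a<x<b} G(x,x))^{-1}. -/

import Mathlib

open Real MeasureTheory Set
open scoped RealInnerProductSpace

noncomputable def fker (α x : ℝ) (s : ℝ) : ℝ :=
  if x < s then Real.exp ((α - 1) * Real.log (s - x)) else 0

lemma fker_of_lt {α x s : ℝ} (h : x < s) : fker α x s = (s - x) ^ (α - 1) := by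
  rw [fker, if_pos h, Real.rpow_def_of_pos (by linarith), mul_comm]

lemma fker_of_le {α x s : ℝ} (h : s ≤ x) : fker α x s = 0 := by
  rw [fker, if_neg (not_lt.2 h)]

lemma fker_meas (α x : ℝ) : Measurable (fker α x) := by
  unfold fker
  exact Measurable.ite (measurableSet_lt measurable_const measurable_id)
    ((measurable_const.mul (Real.measurable_log.comp (measurable_id.sub_const x))).exp)
    measurable_const

lemma rpow_mul_self (α : ℝ) {y : ℝ} (hy : 0 ≤ y) :
    y ^ (α - 1) * y ^ (α - 1) = y ^ (2 * α - 2) := by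
  rcases eq_or_lt_of_le hy with h | h
  · by_cases hα : α = 1
    · subst hα; norm_num
    · rw [← h, Real.zero_rpow (sub_ne_zero.2 hα), Real.zero_rpow (by
        intro h2; apply hα; linarith), mul_zero]
  · rw [← Real.rpow_add h]; ring_nf

lemma fker_sq_integrable {a b α x : ℝ} (hα₁ : 1 / 2 < α) :
    Integrable (fun s => fker α x s ^ 2) (volume.restrict (Set.Ioc a b)) := by
  have hfun : (fun s => fker α x s ^ 2) =
      (Set.Ioi x).indicator (fun s => (s - x) ^ (2 * α - 2)) := by
    funext s
    by_cases h : x < s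
    · rw [fker_of_lt h, Set.indicator_of_mem (Set.mem_Ioi.2 h), sq]
      exact rpow_mul_self α (by linarith)
    · rw [fker_of_le (not_lt.1 h)]
      simp [Set.indicator_apply, Set.mem_Ioi, h]
  rw [hfun, integrable_indicator_iff measurableSet_Ioi]
  have h1 : IntervalIntegrable (fun s : ℝ => s ^ (2 * α - 2)) volume 0 (b - x) :=
    intervalIntegral.intervalIntegrable_rpow' (by linarith)
  have h2 := h1.comp_sub_right x
  simp only [zero_add, sub_add_cancel] at h2
  have h3 : IntegrableOn (fun s => (s - x) ^ (2 * α - 2)) (Set.Ioc x b) volume := h2.1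
  rw [IntegrableOn, Measure.restrict_restrict measurableSet_Ioi]
  exact h3.mono_set (fun s hs => ⟨hs.1, hs.2.2⟩)

lemma fker_memL2 {a b α x : ℝ} (hα₁ : 1 / 2 < α) :
    MemLp (fker α x) 2 (volume.restrict (Set.Ioc a b)) := by
  rw [memLp_two_iff_integrable_sq (fker_meas α x).aestronglyMeasurable]
  exact fker_sq_integrable hα₁

lemma fker_mul_integral {a b α x t : ℝ} (hx : x ∈ Set.Icc a b) (ht : t ∈ Set.Icc a b) :
    ∫ s in Set.Ioc a b, fker α x s * fker α t s
      = ∫ s in max x t..b, (s - x) ^ (α - 1) * (s - t) ^ (α - 1) := by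
  set m := max x t with hm
  have ham : a ≤ m := le_trans hx.1 (le_max_left x t)
  have hmb : m ≤ b := max_le hx.2 ht.2
  have step1 : ∫ s in Set.Ioc a b, fker α x s * fker α t s
      = ∫ s in Set.Ioc a b,
          (Set.Ioc m b).indicator (fun s => (s - x) ^ (α - 1) * (s - t) ^ (α - 1)) s := by
    apply setIntegral_congr_fun measurableSet_Ioc
    intro s hs
    show fker α x s * fker α t s = _
    by_cases h : s ∈ Set.Ioc m b
    · rw [Set.indicator_of_mem h]
      have hxs : x < s := lt_of_le_of_lt (le_max_left x t) h.1
      have hts : t < s := lt_of_le_of_lt (le_max_right x t) h.1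
      rw [fker_of_lt hxs, fker_of_lt hts]
    · have hsm : s ≤ m := by
        rcases not_and_or.1 h with h1 | h1
        · exact le_of_not_gt h1
        · exact absurd hs.2 h1
      rw [Set.indicator_of_notMem h]
      have hsm' : s ≤ max x t := hsm
      rcases max_cases x t with ⟨he, _⟩ | ⟨he, _⟩
      · rw [fker_of_le (he ▸ hsm'), zero_mul]
      · rw [fker_of_le (show s ≤ t from he ▸ hsm'), mul_zero]
  rw [step1, setIntegral_indicator measurableSet_Ioc]
  have : Set.Ioc a b ∩ Set.Ioc m b = Set.Ioc m b := by
    rw [Set.Ioc_inter_Ioc, max_eq_right ham, min_self]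
  rw [this, intervalIntegral.integral_of_le hmb]

/-- Kernel `K(x,t) = (1/Γ(α)²) ∫_{max{x,t}}^{b} (s-x)^{α-1}(s-t)^{α-1} ds`. -/
noncomputable def K (b α x t : ℝ) : ℝ :=
  (1 / Real.Gamma α ^ 2) * ∫ s in max x t..b, (s - x) ^ (α - 1) * (s - t) ^ (α - 1)

/-- Green's function `G(x,t) = K(x,t) - K(a,t)K(x,a)/K(a,a)`. -/
noncomputable def G (a b α x t : ℝ) : ℝ :=
  K b α x t - K b α a t * K b α x a / K b α a a

lemma G_key {a b α : ℝ} (hab : a < b) (hα₁ : 1 / 2 < α) (hα₂ : α ≤ 1) :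
    (∀ x ∈ Set.Icc a b, 0 ≤ G a b α x x) ∧
    (∀ x ∈ Set.Icc a b, ∀ t ∈ Set.Icc a b,
      |G a b α x t| ≤ Real.sqrt (G a b α x x * G a b α t t)) ∧
    (∀ x ∈ Set.Icc a b, G a b α x x ≤
      (1 / Real.Gamma α ^ 2) * ((b - a) ^ (2 * α - 1) / (2 * α - 1))) := by
  set μ := volume.restrict (Set.Ioc a b) with hμ
  set c : ℝ := 1 / Real.Gamma α ^ 2 with hcdef
  have hc : 0 < c := by
    have := Real.Gamma_pos_of_pos (show (0:ℝ) < α by linarith)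
    positivity
  set v : ℝ → Lp ℝ 2 μ := fun x => (fker_memL2 (a := a) (b := b) (α := α) (x := x) hα₁).toLp (fker α x)
    with hv
  have hinner : ∀ x t : ℝ, ⟪v x, v t⟫ = ∫ s in Set.Ioc a b, fker α x s * fker α t s := by
    intro x t
    rw [MeasureTheory.L2.inner_def]
    rw [← hμ]
    refine integral_congr_ae ?_
    filter_upwards [MemLp.coeFn_toLp (fker_memL2 (a := a) (b := b) (α := α) (x := x) hα₁),
      MemLp.coeFn_toLp (fker_memL2 (a := a) (b := b) (α := α) (x := t) hα₁)] with s h1 h2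
    simp [hv, h1, h2, RCLike.inner_apply, starRingEnd_apply]
    ring
  have hK : ∀ x ∈ Set.Icc a b, ∀ t ∈ Set.Icc a b, K b α x t = c * ⟪v x, v t⟫ := by
    intro x hx t ht
    rw [K, hinner, fker_mul_integral hx ht]
  have ha : a ∈ Set.Icc a b := ⟨le_rfl, hab.le⟩
  have hva : v a ≠ 0 := by
    intro h0
    have hae : fker α a =ᵐ[μ] 0 := by
      refine (MemLp.coeFn_toLp (fker_memL2 (a := a) (b := b) (α := α) (x := a) hα₁)).symm.trans ?_
      show ⇑(v a) =ᵐ[μ] 0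
      rw [h0]
      exact MeasureTheory.Lp.coeFn_zero _ _ _
    have hnull : μ {s | fker α a s ≠ 0} = 0 := hae
    have hsub : Set.Ioc a b ⊆ {s | fker α a s ≠ 0} := by
      intro s hs
      have : fker α a s = (s - a) ^ (α - 1) := fker_of_lt hs.1
      simp only [Set.mem_setOf_eq, this]
      exact ne_of_gt (Real.rpow_pos_of_pos (by linarith [hs.1]) _)
    have h1 : μ (Set.Ioc a b) = 0 := measure_mono_null hsub hnull
    rw [hμ, Measure.restrict_apply_self, Real.volume_Ioc] at h1
    simp only [ENNReal.ofReal_eq_zero] at h1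
    linarith
  have hvaa : (0:ℝ) < ⟪v a, v a⟫ := by
    rw [real_inner_self_eq_norm_sq]
    exact pow_pos (norm_pos_iff.2 hva) 2
  set w : ℝ → Lp ℝ 2 μ := fun x => v x - (⟪v x, v a⟫ / ⟪v a, v a⟫) • v a with hw
  have hG : ∀ x ∈ Set.Icc a b, ∀ t ∈ Set.Icc a b, G a b α x t = c * ⟪w x, w t⟫ := by
    intro x hx t ht
    rw [G, hK x hx t ht, hK a ha t ht, hK x hx a ha, hK a ha a ha]
    simp only [hw, inner_sub_left, inner_sub_right, real_inner_smul_left, real_inner_smul_right]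
    rw [real_inner_comm (v a) (v t), real_inner_comm (v a) (v x)]
    field_simp
    ring
  have hdiag : ∀ x ∈ Set.Icc a b, G a b α x x = c * ‖w x‖ ^ 2 := by
    intro x hx
    rw [hG x hx x hx, real_inner_self_eq_norm_sq]
  refine ⟨fun x hx => by rw [hdiag x hx]; positivity, fun x hx t ht => ?_, fun x hx => ?_⟩
  · rw [hG x hx t ht, hdiag x hx, hdiag t ht,
      show c * ‖w x‖ ^ 2 * (c * ‖w t‖ ^ 2) = (c * (‖w x‖ * ‖w t‖)) ^ 2 by ring,
      Real.sqrt_sq (by positivity), abs_mul, abs_of_pos hc]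
    exact mul_le_mul_of_nonneg_left (abs_real_inner_le_norm _ _) hc.le
  · -- upper bound on the diagonal
    have hsub : 0 ≤ K b α a x * K b α x a / K b α a a := by
      rw [hK a ha x hx, hK x hx a ha, real_inner_comm (v a) (v x), hK a ha a ha]
      exact div_nonneg (mul_self_nonneg _) (mul_pos hc hvaa).le
    have hGle : G a b α x x ≤ K b α x x := by
      rw [G]; linarith
    refine hGle.trans ?_
    have h2α : (0:ℝ) < 2 * α - 1 := by linarith
    have hKxx : K b α x x = c * ((b - x) ^ (2 * α - 1) / (2 * α - 1)) := by
      rw [K, max_self]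
      have hcong : ∫ s in x..b, (s - x) ^ (α - 1) * (s - x) ^ (α - 1)
          = ∫ s in x..b, (s - x) ^ (2 * α - 2) := by
        refine intervalIntegral.integral_congr ?_
        intro s hs
        rw [Set.uIcc_of_le hx.2] at hs
        exact rpow_mul_self α (by linarith [hs.1])
      rw [hcong, intervalIntegral.integral_comp_sub_right (fun y => y ^ (2 * α - 2)) x,
        sub_self, integral_rpow (Or.inl (by linarith))]
      rw [Real.zero_rpow (ne_of_gt (by linarith : (0:ℝ) < 2 * α - 2 + 1))]
      norm_num
      ring_nf
      rw [hcdef]; ring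
    rw [hKxx]
    have hmono : (b - x) ^ (2 * α - 1) ≤ (b - a) ^ (2 * α - 1) :=
      Real.rpow_le_rpow (by linarith [hx.2]) (by linarith [hx.1]) h2α.le
    refine mul_le_mul_of_nonneg_left ?_ hc.le
    rw [div_eq_mul_inv, div_eq_mul_inv]
    exact mul_le_mul_of_nonneg_right hmono (inv_nonneg.2 h2α.le)

/-- Lyapunov-type inequality for the fractional Dirichlet problem. -/
theorem lyapunov_fractional (a b α : ℝ) (hab : a < b) (hα₁ : 1 / 2 < α) (hα₂ : α ≤ 1)
    (q u : ℝ → ℝ) (hq : ContinuousOn q (Set.Icc a b)) (hu : ContinuousOn u (Set.Icc a b))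
    (hua : u a = 0) (hub : u b = 0) (hnt : ∃ x ∈ Set.Icc a b, u x ≠ 0)
    (heq : ∀ x ∈ Set.Icc a b, u x = ∫ t in a..b, G a b α x t * q t * u t) :
    (∫ t in a..b, |q t|) ≥ (sSup ((fun x => G a b α x x) '' Set.Ioo a b))⁻¹ := by
  obtain ⟨hGpos, hGCS, hGbd⟩ := G_key hab hα₁ hα₂
  set S := sSup ((fun x => G a b α x x) '' Set.Ioo a b) with hS
  have hBdd : BddAbove ((fun x => G a b α x x) '' Set.Ioo a b) := by
    refine ⟨(1 / Real.Gamma α ^ 2) * ((b - a) ^ (2 * α - 1) / (2 * α - 1)), ?_⟩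
    rintro z ⟨y, hy, rfl⟩
    exact hGbd y ⟨hy.1.le, hy.2.le⟩
  have hle : ∀ y ∈ Set.Ioo a b, G a b α y y ≤ S := fun y hy => le_csSup hBdd ⟨y, hy, rfl⟩
  have hmid : (a + b) / 2 ∈ Set.Ioo a b := ⟨by linarith, by linarith⟩
  have hS0 : 0 ≤ S := le_trans (hGpos _ ⟨hmid.1.le, hmid.2.le⟩) (hle _ hmid)
  have hGbound : ∀ x ∈ Set.Ioo a b, ∀ t ∈ Set.Ioo a b, |G a b α x t| ≤ S := by
    intro x hx t ht
    refine (hGCS x (Set.Ioo_subset_Icc_self hx) t (Set.Ioo_subset_Icc_self ht)).trans ?_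
    have h1 : G a b α x x * G a b α t t ≤ S * S :=
      mul_le_mul (hle x hx) (hle t ht) (hGpos t (Set.Ioo_subset_Icc_self ht)) hS0
    exact (Real.sqrt_le_sqrt h1).trans (le_of_eq (Real.sqrt_mul_self hS0))
  obtain ⟨x₀, hx₀, hmax⟩ := isCompact_Icc.exists_isMaxOn (Set.nonempty_Icc.2 hab.le) hu.abs
  set M := |u x₀| with hM
  have hMpos : 0 < M := by
    obtain ⟨x, hx, hux⟩ := hnt
    exact lt_of_lt_of_le (abs_pos.2 hux) (hmax hx)
  have hx₀a : x₀ ≠ a := by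
    intro h; rw [hM, h, hua, abs_zero] at hMpos; exact lt_irrefl 0 hMpos
  have hx₀b : x₀ ≠ b := by
    intro h; rw [hM, h, hub, abs_zero] at hMpos; exact lt_irrefl 0 hMpos
  have hx₀o : x₀ ∈ Set.Ioo a b :=
    ⟨lt_of_le_of_ne hx₀.1 (Ne.symm hx₀a), lt_of_le_of_ne hx₀.2 hx₀b⟩
  have hFeq := heq x₀ hx₀
  by_cases hFi : IntervalIntegrable (fun t => G a b α x₀ t * q t * u t) volume a b
  swap
  · rw [intervalIntegral.integral_undef hFi] at hFeq
    rw [hM, hFeq, abs_zero] at hMpos; exact absurd hMpos (lt_irrefl 0)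
  have hqi : IntervalIntegrable (fun t => S * M * |q t|) volume a b := by
    apply ContinuousOn.intervalIntegrable
    rw [Set.uIcc_of_le hab.le]
    exact continuousOn_const.mul hq.abs
  have hpt : ∀ t ∈ Set.Icc a b, |G a b α x₀ t * q t * u t| ≤ S * M * |q t| := by
    intro t ht
    have hrhs : 0 ≤ S * M * |q t| := mul_nonneg (mul_nonneg hS0 hMpos.le) (abs_nonneg _)
    rcases eq_or_lt_of_le ht.1 with h | h1
    · rw [← h] at hrhs ⊢; rw [hua, mul_zero, abs_zero]; exact hrhs
    rcases eq_or_lt_of_le ht.2 with h | h2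
    · rw [h] at hrhs ⊢; rw [hub, mul_zero, abs_zero]; exact hrhs
    rw [abs_mul, abs_mul]
    have h3 : |G a b α x₀ t| ≤ S := hGbound x₀ hx₀o t ⟨h1, h2⟩
    have h4 : |u t| ≤ M := hmax ht
    calc |G a b α x₀ t| * |q t| * |u t| ≤ S * |q t| * M :=
          mul_le_mul (mul_le_mul h3 le_rfl (abs_nonneg _) hS0) h4 (abs_nonneg _)
            (mul_nonneg hS0 (abs_nonneg _))
      _ = S * M * |q t| := by ring
  have hchain : M ≤ S * M * ∫ t in a..b, |q t| := by
    calc M = |∫ t in a..b, G a b α x₀ t * q t * u t| := by rw [hM, hFeq]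
      _ ≤ ∫ t in a..b, |G a b α x₀ t * q t * u t| :=
          intervalIntegral.abs_integral_le_integral_abs hab.le
      _ ≤ ∫ t in a..b, S * M * |q t| :=
          intervalIntegral.integral_mono_on hab.le hFi.abs hqi hpt
      _ = S * M * ∫ t in a..b, |q t| := intervalIntegral.integral_const_mul _ _
  have hQ0 : (0:ℝ) ≤ ∫ t in a..b, |q t| :=
    intervalIntegral.integral_nonneg hab.le (fun t _ => abs_nonneg _)
  have hSQ : 1 ≤ S * ∫ t in a..b, |q t| := by
    nlinarith [hchain, hMpos]
  have hSpos : 0 < S := by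
    rcases hS0.lt_or_eq with h | h
    · exact h
    · exfalso; rw [← h, zero_mul] at hSQ; linarith
  rw [ge_iff_le]
  have h5 : S⁻¹ * 1 ≤ S⁻¹ * (S * ∫ t in a..b, |q t|) :=
    mul_le_mul_of_nonneg_left hSQ (inv_nonneg.2 hS0)
  rwa [mul_one, ← mul_assoc, inv_mul_cancel₀ (ne_of_gt hSpos), one_mul] at h5
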